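/- For the Schwarz P family, the period functions E(a) = 2∫₀¹ (1−t²)/√(t⁸+at⁴+1) dt + 4∫₀¹ dt/√(16t⁴−16t²+2+a) and F(a) = 8∫₀¹ t/√(t⁸+at⁴+1) dt are well-defined (the integrals converge) for all a > 2, and satisfy E(14) = F(14). -/

import Mathlib

open Real MeasureTheory intervalIntegral



private lemma Ypos (a : ℝ) (ha : 0 < a) (t : ℝ) : 0 < t ^ 8 + a * t ^ 4 + 1 := by
  have h4 : (0:ℝ) ≤ t ^ 4 := by positivity
  nlinarith [sq_nonneg (t^4)]

private lemma Qpos (a : ℝ) (ha : 2 < a) (t : ℝ) :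
    0 < 16 * t ^ 4 - 16 * t ^ 2 + 2 + a := by
  nlinarith [sq_nonneg (4 * t ^ 2 - 2)]

private lemma qpos (t : ℝ) : 0 < t ^ 4 - t ^ 2 + 1 := by
  nlinarith [sq_nonneg (t ^ 2 - 1/2)]

private lemma contY (a : ℝ) (ha : 0 < a) :
    Continuous fun t : ℝ => Real.sqrt (t ^ 8 + a * t ^ 4 + 1) :=
  Real.continuous_sqrt.comp (by continuity)

private lemma sqrtYne (a : ℝ) (ha : 0 < a) (t : ℝ) :
    Real.sqrt (t ^ 8 + a * t ^ 4 + 1) ≠ 0 :=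
  (Real.sqrt_pos.mpr (Ypos a ha t)).ne'

/-- Period `E(a)` in the x and y directions of the Schwarz P family:
`E(a) = 2∫₀¹ (1−t²)/√(t⁸+at⁴+1) dt + 4∫₀¹ dt/√(16t⁴−16t²+2+a)`. -/
noncomputable def schwarzE (a : ℝ) : ℝ :=
  2 * (∫ t in (0 : ℝ)..1, (1 - t ^ 2) / Real.sqrt (t ^ 8 + a * t ^ 4 + 1)) +
    4 * ∫ t in (0 : ℝ)..1, 1 / Real.sqrt (16 * t ^ 4 - 16 * t ^ 2 + 2 + a)

/-- Period `F(a)` in the z direction of the Schwarz P family: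
`F(a) = 8∫₀¹ t/√(t⁸+at⁴+1) dt`. -/
noncomputable def schwarzF (a : ℝ) : ℝ :=
  8 * ∫ t in (0 : ℝ)..1, t / Real.sqrt (t ^ 8 + a * t ^ 4 + 1)



-- key lemma A : ∫₀¹ (1-2t-t²)/√(t⁸+14t⁴+1) = 0 via the involution t ↦ (1-t)/(1+t)
private lemma keyA :
    (∫ t in (0:ℝ)..1, (1 - 2*t - t^2) / Real.sqrt (t ^ 8 + 14 * t ^ 4 + 1)) = 0 := by
  set g : ℝ → ℝ := fun t => (1 - 2*t - t^2) / Real.sqrt (t ^ 8 + 14 * t ^ 4 + 1) with hg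
  have hgc : Continuous g := by
    apply Continuous.div (by continuity) (contY 14 (by norm_num))
    exact sqrtYne 14 (by norm_num)
  have hder : ∀ s ∈ Set.uIcc (0:ℝ) 1,
      HasDerivAt (fun s : ℝ => (1 - s)/(1 + s)) (-2 / (1 + s)^2) s := by
    intro s hs
    rw [Set.uIcc_of_le (by norm_num)] at hs
    have hs0 : (0:ℝ) < 1 + s := by linarith [hs.1]
    have h1 : HasDerivAt (fun s : ℝ => 1 - s) (-1) s := by
      simpa using (hasDerivAt_id s).const_sub 1
    have h2 : HasDerivAt (fun s : ℝ => 1 + s) 1 s := by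
      simpa using (hasDerivAt_id s).const_add 1
    have := h1.fun_div h2 hs0.ne'
    refine this.congr_deriv ?_
    ring
  have hsub := integral_comp_smul_deriv hder
    (ContinuousOn.div continuousOn_const (by fun_prop)
      (by rw [Set.uIcc_of_le (by norm_num)]; intro x hx
          have : (0:ℝ) < 1 + x := by linarith [hx.1]
          positivity)) hgc
  have h10 : ((1:ℝ) - 0)/(1 + 0) = 1 := by norm_num
  have h01 : ((1:ℝ) - 1)/(1 + 1) = 0 := by norm_num
  rw [h10, h01] at hsub
  have hcong : (∫ s in (0:ℝ)..1, (-2 / (1 + s)^2) • (g ∘ fun s => (1 - s)/(1 + s)) s)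
      = ∫ s in (0:ℝ)..1, g s := by
    apply intervalIntegral.integral_congr
    intro s hs
    rw [Set.uIcc_of_le (by norm_num)] at hs
    have hs0 : (0:ℝ) < 1 + s := by linarith [hs.1]
    have hY := Ypos 14 (by norm_num) s
    have hsY : Real.sqrt (s ^ 8 + 14 * s ^ 4 + 1) ≠ 0 := sqrtYne 14 (by norm_num) s
    simp only [hg, smul_eq_mul, Function.comp]
    have e1 : ((1 - s)/(1 + s)) ^ 8 + 14 * ((1 - s)/(1 + s)) ^ 4 + 1
        = (4/(1 + s)^4)^2 * (s ^ 8 + 14 * s ^ 4 + 1) := by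
      field_simp
      ring
    rw [e1, Real.sqrt_mul (by positivity), Real.sqrt_sq (by positivity)]
    field_simp
    ring
  have : (∫ s in (0:ℝ)..1, g s) = - ∫ s in (0:ℝ)..1, g s := by
    calc (∫ s in (0:ℝ)..1, g s)
        = ∫ s in (0:ℝ)..1, (-2 / (1 + s)^2) • (g ∘ fun s => (1 - s)/(1 + s)) s :=
          hcong.symm
      _ = ∫ x in (1:ℝ)..0, g x := hsub
      _ = - ∫ s in (0:ℝ)..1, g s := by
          conv_lhs => rw [intervalIntegral.integral_symm]
  linarith [this]

-- key lemma B : ∫₀¹ 1/√(t⁴-t²+1) = ∫₀¹ 2(1-t²)/√(t⁸+14t⁴+1) via t = 2s/(1+s²)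
private lemma keyB :
    (∫ t in (0:ℝ)..1, 1 / Real.sqrt (t ^ 4 - t ^ 2 + 1))
      = ∫ t in (0:ℝ)..1, 2 * (1 - t ^ 2) / Real.sqrt (t ^ 8 + 14 * t ^ 4 + 1) := by
  set g : ℝ → ℝ := fun t => 1 / Real.sqrt (t ^ 4 - t ^ 2 + 1) with hg
  have hgc : Continuous g := by
    apply Continuous.div continuous_const (Real.continuous_sqrt.comp (by continuity))
    intro t
    exact (Real.sqrt_pos.mpr (qpos t)).ne'
  have hder : ∀ s ∈ Set.uIcc (0:ℝ) 1,
      HasDerivAt (fun s : ℝ => 2 * s / (1 + s ^ 2)) (2 * (1 - s ^ 2) / (1 + s ^ 2) ^ 2) s := by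
    intro s _
    have hs0 : (0:ℝ) < 1 + s ^ 2 := by positivity
    have h1 : HasDerivAt (fun s : ℝ => 2 * s) 2 s := by
      simpa using (hasDerivAt_id s).const_mul 2
    have h2 : HasDerivAt (fun s : ℝ => 1 + s ^ 2) (2 * s) s := by
      simpa using ((hasDerivAt_pow 2 s).const_add 1)
    have := h1.fun_div h2 hs0.ne'
    refine this.congr_deriv ?_
    ring
  have hcont : ContinuousOn (fun s : ℝ => 2 * (1 - s ^ 2) / (1 + s ^ 2) ^ 2)
      (Set.uIcc (0:ℝ) 1) := by
    apply Continuous.continuousOn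
    apply Continuous.div (by continuity) (by continuity)
    intro s
    positivity
  have hsub := integral_comp_smul_deriv hder hcont hgc
  have h0 : (2 * (0:ℝ)) / (1 + 0 ^ 2) = 0 := by norm_num
  have h1 : (2 * (1:ℝ)) / (1 + 1 ^ 2) = 1 := by norm_num
  rw [h0, h1] at hsub
  rw [← hsub]
  apply intervalIntegral.integral_congr
  intro s _
  have hc0 : (0:ℝ) < 1 + s ^ 2 := by positivity
  have hY := Ypos 14 (by norm_num) s
  have hsY : Real.sqrt (s ^ 8 + 14 * s ^ 4 + 1) ≠ 0 := sqrtYne 14 (by norm_num) s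
  simp only [hg, smul_eq_mul, Function.comp]
  have e1 : (2 * s / (1 + s ^ 2)) ^ 4 - (2 * s / (1 + s ^ 2)) ^ 2 + 1
      = (1 / (1 + s ^ 2) ^ 2) ^ 2 * (s ^ 8 + 14 * s ^ 4 + 1) := by
    field_simp
    ring
  rw [e1, Real.sqrt_mul (by positivity), Real.sqrt_sq (by positivity)]
  field_simp

theorem schwarzP_periods_integrable_and_cubic_at_14' :
    (∀ a : ℝ, 2 < a →
      IntervalIntegrable (fun t => (1 - t ^ 2) / Real.sqrt (t ^ 8 + a * t ^ 4 + 1))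
        volume 0 1 ∧
      IntervalIntegrable (fun t => 1 / Real.sqrt (16 * t ^ 4 - 16 * t ^ 2 + 2 + a))
        volume 0 1 ∧
      IntervalIntegrable (fun t => t / Real.sqrt (t ^ 8 + a * t ^ 4 + 1))
        volume 0 1) ∧
    (2 * (∫ t in (0 : ℝ)..1, (1 - t ^ 2) / Real.sqrt (t ^ 8 + 14 * t ^ 4 + 1)) +
      4 * ∫ t in (0 : ℝ)..1, 1 / Real.sqrt (16 * t ^ 4 - 16 * t ^ 2 + 2 + 14))
      = 8 * ∫ t in (0 : ℝ)..1, t / Real.sqrt (t ^ 8 + 14 * t ^ 4 + 1) := by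
  constructor
  · intro a ha
    have ha0 : (0:ℝ) < a := by linarith
    refine ⟨?_, ?_, ?_⟩
    · exact (Continuous.div (by continuity) (contY a ha0)
        (sqrtYne a ha0)).intervalIntegrable 0 1
    · refine (Continuous.div continuous_const
        (Real.continuous_sqrt.comp (by continuity)) ?_).intervalIntegrable 0 1
      intro t
      exact (Real.sqrt_pos.mpr (Qpos a ha t)).ne'
    · exact (Continuous.div (by continuity) (contY a ha0)
        (sqrtYne a ha0)).intervalIntegrable 0 1
  · set I1 := ∫ t in (0:ℝ)..1, (1 - t ^ 2) / Real.sqrt (t ^ 8 + 14 * t ^ 4 + 1) with hI1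
    set T := ∫ t in (0:ℝ)..1, t / Real.sqrt (t ^ 8 + 14 * t ^ 4 + 1) with hT
    have int1 : IntervalIntegrable
        (fun t : ℝ => (1 - t ^ 2) / Real.sqrt (t ^ 8 + 14 * t ^ 4 + 1)) volume 0 1 :=
      (Continuous.div (by continuity) (contY 14 (by norm_num))
        (sqrtYne 14 (by norm_num))).intervalIntegrable 0 1
    have int3 : IntervalIntegrable
        (fun t : ℝ => t / Real.sqrt (t ^ 8 + 14 * t ^ 4 + 1)) volume 0 1 :=
      (Continuous.div (by continuity) (contY 14 (by norm_num))
        (sqrtYne 14 (by norm_num))).intervalIntegrable 0 1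
    have hA : (∫ t in (0:ℝ)..1, 1 / Real.sqrt (16 * t ^ 4 - 16 * t ^ 2 + 2 + 14))
        = (1/4) * ∫ t in (0:ℝ)..1, 1 / Real.sqrt (t ^ 4 - t ^ 2 + 1) := by
      rw [← intervalIntegral.integral_const_mul]
      apply intervalIntegral.integral_congr
      intro t _
      have hq := qpos t
      have hsq : Real.sqrt (t ^ 4 - t ^ 2 + 1) ≠ 0 := (Real.sqrt_pos.mpr hq).ne'
      show 1 / Real.sqrt (16 * t ^ 4 - 16 * t ^ 2 + 2 + 14)
          = 1/4 * (1 / Real.sqrt (t ^ 4 - t ^ 2 + 1))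
      rw [show (16 * t ^ 4 - 16 * t ^ 2 + 2 + 14 : ℝ) = 4 ^ 2 * (t ^ 4 - t ^ 2 + 1) by ring,
        Real.sqrt_mul (by positivity), Real.sqrt_sq (by norm_num)]
      ring
    have keyB2 : (∫ t in (0:ℝ)..1, 1 / Real.sqrt (t ^ 4 - t ^ 2 + 1)) = 2 * I1 := by
      rw [keyB]
      simp only [mul_div_assoc]
      exact intervalIntegral.integral_const_mul 2 _
    have key : I1 = 2 * T := by
      have hsplit : (∫ t in (0:ℝ)..1,
          ((1 - t ^ 2) / Real.sqrt (t ^ 8 + 14 * t ^ 4 + 1)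
            - 2 * (t / Real.sqrt (t ^ 8 + 14 * t ^ 4 + 1)))) = I1 - 2 * T := by
        rw [intervalIntegral.integral_sub int1 (int3.const_mul 2),
          intervalIntegral.integral_const_mul]
      have hc : (∫ t in (0:ℝ)..1,
          ((1 - t ^ 2) / Real.sqrt (t ^ 8 + 14 * t ^ 4 + 1)
            - 2 * (t / Real.sqrt (t ^ 8 + 14 * t ^ 4 + 1))))
          = ∫ t in (0:ℝ)..1, (1 - 2*t - t^2) / Real.sqrt (t ^ 8 + 14 * t ^ 4 + 1) := by
        apply intervalIntegral.integral_congr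
        intro t _
        have hsY := sqrtYne 14 (by norm_num) t
        field_simp
        ring
      have := keyA
      rw [← hc, hsplit] at this
      linarith
    rw [hA, keyB2, key]
    ring

/-- For all `a > 2`, the integrals defining the Schwarz P period functions `E` and `F`
converge, and `E(14) = F(14)` (the classical Schwarz P surface has a cubic period cell). -/
theorem schwarzP_periods_integrable_and_cubic_at_14 :
    (∀ a : ℝ, 2 < a →
      IntervalIntegrable (fun t => (1 - t ^ 2) / Real.sqrt (t ^ 8 + a * t ^ 4 + 1))
        volume 0 1 ∧
      IntervalIntegrable (fun t => 1 / Real.sqrt (16 * t ^ 4 - 16 * t ^ 2 + 2 + a))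
        volume 0 1 ∧
      IntervalIntegrable (fun t => t / Real.sqrt (t ^ 8 + a * t ^ 4 + 1))
        volume 0 1) ∧
    schwarzE 14 = schwarzF 14 :=
  ⟨schwarzP_periods_integrable_and_cubic_at_14'.1, by
    unfold schwarzE schwarzF
    exact schwarzP_periods_integrable_and_cubic_at_14'.2⟩
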